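/- Let δ ∈ (0,1), 𝒦 a finite set partitioned into routes, and x : 𝒦 → ℝ≥0. For each route r let k_r denote its first subserver, and let f and the maximizer K* (the dominant set) be as in the piecewise-linear test function V(x) = max_K f(K). Suppose the state x lies in the invariant set Q (so along each route the values x are non-increasing, in particular the bottleneck value on route r is at most x(k_r)), and suppose each route that intersects K* has its bottleneck b satisfying f(K*\{b}) ≤ f(K*). If route r̂ achieves the minimum of x(k_r) over all routes and k_{r̂} ∈ K*, then k_r ∈ K* for every route r; equivalently, either the route minimizing the first-subserver queue is non-dominant, or every route's first subserver is dominant. -/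

import Mathlib

set_option maxHeartbeats 1000000 in


theorem min_route_non_dominant_or_all_dominant
    {ι ρ : Type*} [Fintype ι] [DecidableEq ι] [Fintype ρ]
    (δ : ℝ) (hδ0 : 0 < δ) (hδ1 : δ < 1) (x : ι → ℝ) (hx : ∀ k, 0 ≤ x k)
    (hpos : 0 < ∑ k, x k)
    (f : Finset ι → ℝ)
    (hf : ∀ K : Finset ι, f K = ((1 + ((K.card : ℝ) - 1) * δ) / (K.card : ℝ)) * ∑ k ∈ K, x k)
    (Kstar : Finset ι) (hKne : Kstar.Nonempty)
    (hmax : ∀ K : Finset ι, K.Nonempty → f K ≤ f Kstar)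
    (onRoute : ι → ρ) (first : ρ → ι) (bneck : ρ → ι)
    (hfr : ∀ r : ρ, onRoute (first r) = r)
    (hbr : ∀ r : ρ, onRoute (bneck r) = r)
    -- invariant set: along each route values are non-increasing, in particular
    -- the bottleneck value on route r is at most the first subserver's value
    (hQ : ∀ r : ρ, x (bneck r) ≤ x (first r))
    -- every route intersecting the dominant set has its bottleneck in Kstar
    -- and that bottleneck satisfies f(Kstar \ {b}) ≤ f(Kstar)
    (hbK : ∀ r : ρ, (∃ k ∈ Kstar, onRoute k = r) →
      bneck r ∈ Kstar ∧ f (Kstar.erase (bneck r)) ≤ f Kstar)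
    (rhat : ρ) (hmin : ∀ r : ρ, x (first rhat) ≤ x (first r))
    (hdom : first rhat ∈ Kstar) :
    ∀ r : ρ, first r ∈ Kstar := by
  intro r
  by_contra hk
  set k := first r with hkdef
  have hm1 : 1 ≤ Kstar.card := hKne.card_pos
  set m : ℝ := (Kstar.card : ℝ) with hmdef
  have hm : (1:ℝ) ≤ m := by rw [hmdef]; exact_mod_cast hm1
  have hm0 : (0:ℝ) < m := by linarith
  set S : ℝ := ∑ i ∈ Kstar, x i with hSdef
  have hSnn : 0 ≤ S := Finset.sum_nonneg (fun i _ => hx i)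
  -- S > 0
  have huniv : (Finset.univ : Finset ι).Nonempty := by
    by_contra h
    rw [Finset.not_nonempty_iff_eq_empty] at h
    rw [h] at hpos
    simp at hpos
  have hn1 : 1 ≤ (Finset.univ : Finset ι).card := huniv.card_pos
  have hn : (1:ℝ) ≤ ((Finset.univ : Finset ι).card : ℝ) := by exact_mod_cast hn1
  have hfupos : 0 < f (Finset.univ : Finset ι) := by
    rw [hf]
    have hc : 0 < (1 + (((Finset.univ : Finset ι).card : ℝ) - 1) * δ) /
        ((Finset.univ : Finset ι).card : ℝ) := by
      apply div_pos
      · nlinarith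
      · linarith
    exact mul_pos hc hpos
  have hfK : f Kstar = ((1 + (m - 1) * δ) / m) * S := hf Kstar
  have hfKpos : 0 < f Kstar := lt_of_lt_of_le hfupos (hmax _ huniv)
  have hS : 0 < S := by
    by_contra h
    push_neg at h
    have : S = 0 := le_antisymm h hSnn
    rw [hfK, this, mul_zero] at hfKpos
    exact hfKpos.false
  -- bottleneck facts
  obtain ⟨hbKs, hfb⟩ := hbK rhat ⟨first rhat, hdom, hfr rhat⟩
  set b := bneck rhat with hbdef
  have hxbk : x b ≤ x k := le_trans (hQ rhat) (hmin r)
  -- key inequality: (1-δ) S ≤ m (1 + (m-2) δ) x b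
  have key : (1 - δ) * S ≤ m * (1 + (m - 2) * δ) * x b := by
    rcases eq_or_lt_of_le hm1 with h1 | h2
    · -- card = 1, Kstar = {b}
      obtain ⟨a, ha⟩ := Finset.card_eq_one.mp h1.symm
      have hba : b = a := by
        have := hbKs
        rw [ha, Finset.mem_singleton] at this
        exact this
      have hSb : S = x b := by rw [hSdef, ha, Finset.sum_singleton, hba]
      have hm1' : m = 1 := by rw [hmdef, ← h1]; norm_num
      rw [hSb, hm1']; nlinarith [hx b]
    · -- card ≥ 2
      have hm2 : (2:ℝ) ≤ m := by rw [hmdef]; exact_mod_cast h2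
      have hcard : ((Kstar.erase b).card : ℝ) = m - 1 := by
        rw [Finset.card_erase_of_mem hbKs]
        have : 1 ≤ Kstar.card := hm1
        push_cast [Nat.cast_sub this]
        ring
      have hsum : ∑ i ∈ Kstar.erase b, x i = S - x b := by
        have := Finset.add_sum_erase Kstar x hbKs
        rw [hSdef]; linarith [this]
      rw [hf (Kstar.erase b), hf Kstar, hcard, hsum] at hfb
      rw [div_mul_eq_mul_div, div_mul_eq_mul_div,
        div_le_div_iff₀ (by linarith) (by linarith)] at hfb
      nlinarith [hfb]
  -- x b > 0, hence x k > 0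
  have hcoef : 0 < m * (1 + (m - 2) * δ) := by
    have h2 : 0 < 1 + (m - 2) * δ := by
      nlinarith [mul_nonneg (by linarith : (0:ℝ) ≤ m - 1) hδ0.le]
    exact mul_pos hm0 h2
  have hxb : 0 < x b := by
    by_contra h
    push_neg at h
    nlinarith [mul_nonpos_of_nonneg_of_nonpos hcoef.le h]
  have hxk : 0 < x k := lt_of_lt_of_le hxb hxbk
  -- contradiction via f (insert k Kstar)
  have hins := hmax (insert k Kstar) ⟨k, Finset.mem_insert_self k Kstar⟩
  have hcard' : ((insert k Kstar).card : ℝ) = m + 1 := by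
    rw [Finset.card_insert_of_notMem hk]; push_cast; ring
  have hsum' : ∑ i ∈ insert k Kstar, x i = x k + S := by
    rw [Finset.sum_insert hk]
  rw [hf (insert k Kstar), hfK, hcard', hsum'] at hins
  rw [div_mul_eq_mul_div, div_mul_eq_mul_div,
    div_le_div_iff₀ (by linarith) (by linarith)] at hins
  have h3 : m * (1 + m * δ) * x k ≤ (1 - δ) * S := by nlinarith [hins]
  have h4 : (1 - δ) * S ≤ m * (1 + (m - 2) * δ) * x k :=
    key.trans (mul_le_mul_of_nonneg_left hxbk hcoef.le)
  nlinarith [h3, h4, mul_pos (mul_pos hm0 hδ0) hxk]
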